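/- Let λ₁,...,λₙ > 0 and let Γ be a lattice of the oscillator group Osc_n(λ₁,...,λₙ). Suppose t₀ > 0 generates the additive subgroup T(Γ) = { t ∈ ℝ : (z, u, t) ∈ Γ for some z ∈ ℝ, u ∈ ℝ^{2n} } of ℝ, and suppose exp(t₀ N_λ) = Id (the case K₀ = 1). Then Γ contains an element of the form (z, 0, t) with z ≠ 0 and t ≠ 0. -/

import Mathlib

open Real

noncomputable section

/-- rotation by angle `θ` acting on `ℝ × ℝ` -/
def rot (θ : ℝ) (p : ℝ × ℝ) : ℝ × ℝ :=
  (Real.cos θ * p.1 - Real.sin θ * p.2, Real.sin θ * p.1 + Real.cos θ * p.2)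

/-- the matrix `[[0,1],[-1,0]]` acting on `ℝ × ℝ` -/
def Jpair (p : ℝ × ℝ) : ℝ × ℝ := (p.2, -p.1)

/-- euclidean inner product on `ℝ × ℝ` -/
def dot2 (p q : ℝ × ℝ) : ℝ := p.1 * q.1 + p.2 * q.2

/-- underlying set `ℝ × ℝ^{2n} × ℝ` of the oscillator group, where the middle
factor `ℝ^{2n}` is recorded as `n` pairs `(x_i, y_i)`. -/
abbrev OscG (n : ℕ) := ℝ × (Fin n → ℝ × ℝ) × ℝ

/-- multiplication of the oscillator group `Osc_n(λ₁,…,λₙ)`: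
`(z₁,v₁,t₁)·(z₂,v₂,t₂) = (z₁+z₂+½ v₁ᵀ J R(t₁) v₂, v₁ + R(t₁)v₂, t₁+t₂)`,
where `R(t)` rotates the `i`-th pair by the angle `λ_i t`. -/
def oscMul {n : ℕ} (lam : Fin n → ℝ) (g h : OscG n) : OscG n :=
  (g.1 + h.1 + (1/2) * ∑ i, dot2 (g.2.1 i) (Jpair (rot (lam i * g.2.2) (h.2.1 i))),
   fun i => g.2.1 i + rot (lam i * g.2.2) (h.2.1 i),
   g.2.2 + h.2.2)

/-- identity element of the oscillator group -/
def oscOne (n : ℕ) : OscG n := (0, fun _ => (0, 0), 0)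

/-- inverse in the oscillator group: `(z,v,t)⁻¹ = (-z, -R(-t)v, -t)` -/
def oscInv {n : ℕ} (lam : Fin n → ℝ) (g : OscG n) : OscG n :=
  (-g.1, fun i => -(rot (lam i * (-g.2.2)) (g.2.1 i)), -g.2.2)

/-- `Γ` is a lattice of the oscillator group: a discrete subgroup with compact
quotient (the quotient by the right multiplication action of `Γ`). -/
structure IsLattice {n : ℕ} (lam : Fin n → ℝ) (Γ : Set (OscG n)) : Prop where
  one_mem : oscOne n ∈ Γ
  mul_mem : ∀ g ∈ Γ, ∀ h ∈ Γ, oscMul lam g h ∈ Γ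
  inv_mem : ∀ g ∈ Γ, oscInv lam g ∈ Γ
  discrete : DiscreteTopology Γ
  cocompact : CompactSpace (Quot (fun g h : OscG n => ∃ γ ∈ Γ, h = oscMul lam g γ))

/-- `Q(X) = 2ad + Σ_k (b_k² + c_k²)/λ_k` for `X = (d,(b₁,c₁,…,bₙ,cₙ),a)` -/
def Qform {n : ℕ} (lam : Fin n → ℝ) (d a : ℝ) (b c : Fin n → ℝ) : ℝ :=
  2 * a * d + ∑ k, (b k ^ 2 + c k ^ 2) / lam k

/-- the geodesic through the identity with initial velocity
`X = (d,(b₁,c₁,…,bₙ,cₙ),a)` for the bi-invariant Lorentzian metric on the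
oscillator group. -/
def geo {n : ℕ} (lam : Fin n → ℝ) (d : ℝ) (b c : Fin n → ℝ) (a : ℝ) (s : ℝ) : OscG n :=
  if a = 0 then (d * s, fun j => (b j * s, c j * s), 0)
  else
    ((d + (1/(2*a)) * ∑ k, (b k ^ 2 + c k ^ 2) / lam k) * s
        - (1/(2*a^2)) * ∑ k, ((b k ^ 2 + c k ^ 2) / (lam k)^2) * Real.sin (lam k * a * s),
     fun j => ((1/(a * lam j)) * (b j * Real.sin (lam j * a * s)
                  + c j * Real.cos (lam j * a * s) - c j),
               (1/(a * lam j)) * (-(b j) * Real.cos (lam j * a * s)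
                  + c j * Real.sin (lam j * a * s) + b j)),
     a * s)


section OscAux

namespace Osc

variable {n : ℕ}

@[simp] lemma rot_zero (p : ℝ × ℝ) : rot 0 p = p := by
  simp [rot]

lemma rot_rot (a b : ℝ) (p : ℝ × ℝ) : rot a (rot b p) = rot (a + b) p := by
  simp only [rot, Real.cos_add, Real.sin_add, Prod.mk.injEq]
  constructor <;> ring

@[simp] lemma rot_zero_pt (θ : ℝ) : rot θ ((0:ℝ), (0:ℝ)) = ((0:ℝ), (0:ℝ)) := by
  simp [rot]

@[simp] lemma rot_zero_pt' (θ : ℝ) : rot θ (0 : ℝ × ℝ) = 0 := by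
  have : (0 : ℝ × ℝ) = ((0:ℝ), (0:ℝ)) := rfl
  rw [this, rot_zero_pt]

@[simp] lemma Jpair_zero : Jpair (0 : ℝ × ℝ) = 0 := by
  simp only [Jpair]
  have : (0 : ℝ × ℝ).1 = 0 := rfl
  have h2 : (0 : ℝ × ℝ).2 = 0 := rfl
  rw [this, h2, neg_zero]
  rfl

@[simp] lemma dot2_zero_right (p : ℝ × ℝ) : dot2 p 0 = 0 := by
  simp [dot2]

@[simp] lemma dot2_zero_left (p : ℝ × ℝ) : dot2 0 p = 0 := by
  simp [dot2]

lemma rot_neg_pt (θ : ℝ) (p : ℝ × ℝ) : rot θ (-p) = -rot θ p := by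
  simp only [rot, Prod.fst_neg, Prod.snd_neg, Prod.neg_mk, Prod.mk.injEq]
  constructor <;> ring

lemma rot_add_pt (θ : ℝ) (p q : ℝ × ℝ) : rot θ (p + q) = rot θ p + rot θ q := by
  simp only [rot, Prod.fst_add, Prod.snd_add, Prod.mk_add_mk, Prod.mk.injEq]
  constructor <;> ring

lemma dot2_rot_rot (θ : ℝ) (p q : ℝ × ℝ) :
    dot2 (rot θ p) (Jpair (rot θ q)) = dot2 p (Jpair q) := by
  simp only [rot, dot2, Jpair]
  linear_combination (p.1 * q.2 - p.2 * q.1) * Real.sin_sq_add_cos_sq θ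

/-- the standard symplectic pairing -/
def om {n : ℕ} (v w : Fin n → ℝ × ℝ) : ℝ := ∑ i, dot2 (v i) (Jpair (w i))

lemma dot2J_eq (p q : ℝ × ℝ) : dot2 p (Jpair q) = p.1 * q.2 - p.2 * q.1 := by
  simp [dot2, Jpair]; ring

lemma om_self (v : Fin n → ℝ × ℝ) : om v v = 0 := by
  unfold om
  rw [Finset.sum_eq_zero]
  intro i _
  rw [dot2J_eq]; ring

lemma om_anti (v w : Fin n → ℝ × ℝ) : om v w = -om w v := by
  unfold om
  rw [← Finset.sum_neg_distrib]
  refine Finset.sum_congr rfl fun i _ => by rw [dot2J_eq, dot2J_eq]; ring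

lemma om_neg_right (v w : Fin n → ℝ × ℝ) : om v (-w) = -om v w := by
  unfold om
  rw [← Finset.sum_neg_distrib]
  refine Finset.sum_congr rfl fun i _ => by
    simp only [Pi.neg_apply, dot2J_eq, Prod.fst_neg, Prod.snd_neg]; ring

lemma om_add_left (u v w : Fin n → ℝ × ℝ) : om (u + v) w = om u w + om v w := by
  unfold om
  rw [← Finset.sum_add_distrib]
  refine Finset.sum_congr rfl fun i _ => by
    simp only [Pi.add_apply, dot2J_eq, Prod.fst_add, Prod.snd_add]; ring

lemma om_add_right (u v w : Fin n → ℝ × ℝ) : om u (v + w) = om u v + om u w := by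
  unfold om
  rw [← Finset.sum_add_distrib]
  refine Finset.sum_congr rfl fun i _ => by
    simp only [Pi.add_apply, dot2J_eq, Prod.fst_add, Prod.snd_add]; ring

lemma om_smul_left (c : ℝ) (v w : Fin n → ℝ × ℝ) : om (c • v) w = c * om v w := by
  unfold om
  rw [Finset.mul_sum]
  refine Finset.sum_congr rfl fun i _ => by
    simp only [Pi.smul_apply, Prod.smul_fst, Prod.smul_snd, smul_eq_mul, dot2J_eq]; ring

lemma om_smul_right (c : ℝ) (v w : Fin n → ℝ × ℝ) : om v (c • w) = c * om v w := by
  unfold om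
  rw [Finset.mul_sum]
  refine Finset.sum_congr rfl fun i _ => by
    simp only [Pi.smul_apply, Prod.smul_fst, Prod.smul_snd, smul_eq_mul, dot2J_eq]; ring

lemma om_abs_le (v w : Fin n → ℝ × ℝ) : |om v w| ≤ 2 * n * ‖v‖ * ‖w‖ := by
  unfold om
  calc |∑ i, dot2 (v i) (Jpair (w i))| ≤ ∑ i : Fin n, |dot2 (v i) (Jpair (w i))| :=
        Finset.abs_sum_le_sum_abs _ _
    _ ≤ ∑ _i : Fin n, 2 * ‖v‖ * ‖w‖ := by
        refine Finset.sum_le_sum fun i _ => ?_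
        rw [dot2J_eq]
        have h1 : |(v i).1| ≤ ‖v‖ := le_trans (norm_fst_le (v i)) (norm_le_pi_norm v i)
        have h2 : |(v i).2| ≤ ‖v‖ := le_trans (norm_snd_le (v i)) (norm_le_pi_norm v i)
        have h3 : |(w i).1| ≤ ‖w‖ := le_trans (norm_fst_le (w i)) (norm_le_pi_norm w i)
        have h4 : |(w i).2| ≤ ‖w‖ := le_trans (norm_snd_le (w i)) (norm_le_pi_norm w i)
        have hv : (0:ℝ) ≤ ‖v‖ := norm_nonneg v
        have hw : (0:ℝ) ≤ ‖w‖ := norm_nonneg w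
        calc |(v i).1 * (w i).2 - (v i).2 * (w i).1|
            ≤ |(v i).1 * (w i).2| + |(v i).2 * (w i).1| := abs_sub _ _
          _ = |(v i).1| * |(w i).2| + |(v i).2| * |(w i).1| := by rw [abs_mul, abs_mul]
          _ ≤ ‖v‖ * ‖w‖ + ‖v‖ * ‖w‖ := by
              gcongr <;> first | exact abs_nonneg _ | assumption
          _ = 2 * ‖v‖ * ‖w‖ := by ring
    _ = 2 * n * ‖v‖ * ‖w‖ := by
        rw [Finset.sum_const, Finset.card_univ, Fintype.card_fin]; push_cast; ring

end Osc

namespace Osc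

variable {n : ℕ}

lemma oscMul_one (lam : Fin n → ℝ) (g : OscG n) : oscMul lam g (oscOne n) = g := by
  obtain ⟨z, v, t⟩ := g
  unfold oscMul oscOne
  refine Prod.ext ?_ (Prod.ext ?_ ?_)
  · simp [dot2, Jpair]
  · funext i; simp
  · simp

lemma oscOne_mul (lam : Fin n → ℝ) (g : OscG n) : oscMul lam (oscOne n) g = g := by
  obtain ⟨z, v, t⟩ := g
  unfold oscMul oscOne
  refine Prod.ext ?_ (Prod.ext ?_ ?_)
  · simp [dot2, mul_zero, rot_zero]
  · funext i; simp [mul_zero, rot_zero]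
  · simp

lemma oscMul_inv_cancel (lam : Fin n → ℝ) (g γ : OscG n) :
    oscMul lam (oscMul lam g γ) (oscInv lam γ) = g := by
  obtain ⟨z, v, t⟩ := g
  obtain ⟨ζ, w, σ⟩ := γ
  unfold oscMul oscInv
  simp only
  have key : ∀ i : Fin n, rot (lam i * (t + σ)) (-(rot (lam i * -σ) (w i)))
      = -(rot (lam i * t) (w i)) := by
    intro i
    rw [rot_neg_pt, rot_rot]
    ring_nf
  refine Prod.ext ?_ (Prod.ext ?_ ?_)
  · simp only [key]
    have : ∀ i : Fin n,
        dot2 ((fun i => v i + rot (lam i * t) (w i)) i) (Jpair (-(rot (lam i * t) (w i))))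
        = -(dot2 (v i) (Jpair (rot (lam i * t) (w i)))) - dot2 (rot (lam i * t) (w i)) (Jpair (rot (lam i * t) (w i))) := by
      intro i
      simp only [dot2J_eq, Prod.fst_neg, Prod.snd_neg, Prod.fst_add, Prod.snd_add]
      ring
    rw [Finset.sum_congr rfl (fun i _ => this i)]
    have hz : ∀ i : Fin n, dot2 (rot (lam i * t) (w i)) (Jpair (rot (lam i * t) (w i))) = 0 := by
      intro i; rw [dot2J_eq]; ring
    simp only [hz, sub_zero, Finset.sum_neg_distrib]
    ring
  · funext i
    simp only [key]
    abel
  · ring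

lemma oscMul_assoc (lam : Fin n → ℝ) (g h k : OscG n) :
    oscMul lam (oscMul lam g h) k = oscMul lam g (oscMul lam h k) := by
  obtain ⟨z₁, v₁, t₁⟩ := g
  obtain ⟨z₂, v₂, t₂⟩ := h
  obtain ⟨z₃, v₃, t₃⟩ := k
  unfold oscMul
  simp only
  refine Prod.ext ?_ (Prod.ext ?_ ?_)
  · -- z component
    have key : ∀ i : Fin n,
        dot2 (v₁ i + rot (lam i * t₁) (v₂ i)) (Jpair (rot (lam i * (t₁ + t₂)) (v₃ i)))
        = dot2 (v₂ i) (Jpair (rot (lam i * t₂) (v₃ i)))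
          + dot2 (v₁ i) (Jpair (rot (lam i * t₁) (rot (lam i * t₂) (v₃ i)))) := by
      intro i
      have h1 : rot (lam i * (t₁ + t₂)) (v₃ i)
          = rot (lam i * t₁) (rot (lam i * t₂) (v₃ i)) := by
        rw [rot_rot]; ring_nf
      rw [h1]
      have h2 := dot2_rot_rot (lam i * t₁) (v₂ i) (rot (lam i * t₂) (v₃ i))
      simp only [dot2J_eq, Prod.fst_add, Prod.snd_add] at *
      linarith
    have key2 : ∀ i : Fin n,
        dot2 (v₁ i) (Jpair (rot (lam i * t₁) (v₂ i + rot (lam i * t₂) (v₃ i))))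
        = dot2 (v₁ i) (Jpair (rot (lam i * t₁) (v₂ i)))
          + dot2 (v₁ i) (Jpair (rot (lam i * t₁) (rot (lam i * t₂) (v₃ i)))) := by
      intro i
      rw [rot_add_pt]
      simp only [dot2J_eq, Prod.fst_add, Prod.snd_add]
      ring
    rw [Finset.sum_congr rfl (fun i _ => key i), Finset.sum_congr rfl (fun i _ => key2 i),
      Finset.sum_add_distrib, Finset.sum_add_distrib]
    ring
  · funext i
    simp only
    rw [rot_add_pt, rot_rot]
    have : lam i * t₁ + lam i * t₂ = lam i * (t₁ + t₂) := by ring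
    rw [this, add_assoc]
  · ring

end Osc

namespace Osc

variable {n : ℕ}

lemma cont_mul_right (lam : Fin n → ℝ) (γ : OscG n) :
    Continuous (fun g : OscG n => oscMul lam g γ) := by
  unfold oscMul rot dot2 Jpair
  refine Continuous.prodMk ?_ (Continuous.prodMk ?_ ?_)
  · refine Continuous.add (Continuous.add (continuous_fst) ?_) ?_
    · exact continuous_const
    · refine Continuous.mul continuous_const ?_
      refine continuous_finset_sum _ fun i _ => ?_
      fun_prop
  · refine continuous_pi fun i => ?_
    fun_prop
  · fun_prop

/-- the right-coset relation -/
def rel {n : ℕ} (lam : Fin n → ℝ) (Γ : Set (OscG n)) : OscG n → OscG n → Prop :=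
  fun g h => ∃ γ ∈ Γ, h = oscMul lam g γ

lemma rel_equivalence (lam : Fin n → ℝ) (Γ : Set (OscG n)) (hΓ : IsLattice lam Γ) :
    Equivalence (rel lam Γ) := by
  constructor
  · intro g
    exact ⟨oscOne n, hΓ.one_mem, (oscMul_one lam g).symm⟩
  · rintro g h ⟨γ, hγ, rfl⟩
    exact ⟨oscInv lam γ, hΓ.inv_mem γ hγ, (oscMul_inv_cancel lam g γ).symm⟩
  · rintro g h k ⟨γ, hγ, rfl⟩ ⟨γ', hγ', rfl⟩
    exact ⟨oscMul lam γ γ', hΓ.mul_mem γ hγ γ' hγ', oscMul_assoc lam g γ γ'⟩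

lemma exists_fund_radius (lam : Fin n → ℝ) (Γ : Set (OscG n)) (hΓ : IsLattice lam Γ) :
    ∃ R : ℝ, 0 < R ∧ ∀ g : OscG n, ∃ γ ∈ Γ, ‖oscMul lam g γ‖ ≤ R := by
  have hcomp : CompactSpace (Quot (rel lam Γ)) := hΓ.cocompact
  set q : OscG n → Quot (rel lam Γ) := Quot.mk (rel lam Γ) with hq
  have hopen : ∀ k : ℕ, IsOpen (q '' Metric.ball (0 : OscG n) (k + 1)) := by
    intro k
    rw [isOpen_coinduced (f := q)]
    have himg : q ⁻¹' (q '' Metric.ball (0 : OscG n) (k + 1))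
        = ⋃ γ ∈ Γ, (fun g => oscMul lam g γ) ⁻¹' Metric.ball (0 : OscG n) (k + 1) := by
      ext g
      simp only [Set.mem_preimage, Set.mem_image, Set.mem_iUnion]
      constructor
      · rintro ⟨b, hb, hbg⟩
        have hrel : rel lam Γ b g :=
          (Equivalence.eqvGen_iff (rel_equivalence lam Γ hΓ)).mp (Quot.eq.mp hbg)
        obtain ⟨γ, hγ, rfl⟩ := hrel
        exact ⟨oscInv lam γ, ⟨hΓ.inv_mem γ hγ, by rwa [oscMul_inv_cancel]⟩⟩
      · rintro ⟨γ, hγ, hmem⟩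
        refine ⟨oscMul lam g γ, hmem, ?_⟩
        apply Quot.sound
        exact ⟨oscInv lam γ, hΓ.inv_mem γ hγ, (oscMul_inv_cancel lam g γ).symm⟩
    rw [himg]
    exact isOpen_biUnion fun γ _ =>
      (Metric.isOpen_ball).preimage (cont_mul_right lam γ)
  have hcover : (Set.univ : Set (Quot (rel lam Γ)))
      ⊆ ⋃ k : ℕ, q '' Metric.ball (0 : OscG n) (k + 1) := by
    intro x _
    obtain ⟨g, rfl⟩ := Quot.exists_rep x
    obtain ⟨k, hk⟩ := exists_nat_gt ‖g‖
    refine Set.mem_iUnion.mpr ⟨k, ⟨g, ?_, rfl⟩⟩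
    rw [Metric.mem_ball, dist_zero_right]
    linarith
  obtain ⟨t, ht⟩ := isCompact_univ.elim_finite_subcover _ hopen hcover
  set K : ℕ := t.sup id with hK
  refine ⟨(K : ℝ) + 1, by positivity, fun g => ?_⟩
  have hx : q g ∈ ⋃ k ∈ t, q '' Metric.ball (0 : OscG n) (k + 1) := ht (Set.mem_univ _)
  obtain ⟨k, hkt, b, hb, hbg⟩ := by
    simpa only [Set.mem_iUnion, Set.mem_image] using hx
  have hrel : rel lam Γ b g :=
    (Equivalence.eqvGen_iff (rel_equivalence lam Γ hΓ)).mp (Quot.eq.mp hbg)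
  obtain ⟨γ, hγ, rfl⟩ := hrel
  refine ⟨oscInv lam γ, hΓ.inv_mem γ hγ, ?_⟩
  rw [oscMul_inv_cancel]
  rw [Metric.mem_ball, dist_zero_right] at hb
  have hkK : (k : ℝ) ≤ K := by
    exact_mod_cast Finset.le_sup (f := id) hkt
  linarith

lemma exists_sep_radius (lam : Fin n → ℝ) (Γ : Set (OscG n)) (hΓ : IsLattice lam Γ) :
    ∃ ε : ℝ, 0 < ε ∧ ∀ γ ∈ Γ, dist γ (oscOne n) < ε → γ = oscOne n := by
  have hd : DiscreteTopology Γ := hΓ.discrete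
  have h1 : IsOpen ({⟨oscOne n, hΓ.one_mem⟩} : Set Γ) := isOpen_discrete _
  rw [isOpen_induced_iff] at h1
  obtain ⟨U, hU, hUeq⟩ := h1
  have hmem : oscOne n ∈ U := by
    have : (⟨oscOne n, hΓ.one_mem⟩ : Γ) ∈ (Subtype.val ⁻¹' U : Set Γ) := by
      rw [hUeq]; rfl
    exact this
  obtain ⟨ε, hε, hball⟩ := Metric.isOpen_iff.mp hU (oscOne n) hmem
  refine ⟨ε, hε, fun γ hγ hdist => ?_⟩
  have : (⟨γ, hγ⟩ : Γ) ∈ (Subtype.val ⁻¹' U : Set Γ) := hball hdist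
  rw [hUeq] at this
  exact congrArg Subtype.val (Set.mem_singleton_iff.mp this)

end Osc

namespace Osc

variable {n : ℕ}

@[simp] lemma zero_fun_eq : (fun _ : Fin n => ((0:ℝ), (0:ℝ))) = (0 : Fin n → ℝ × ℝ) := by
  funext i
  rfl

section Ctx

variable (lam : Fin n → ℝ) (Γ : Set (OscG n)) (t₀ : ℝ)

/-- projection of `Γ` to the `v`-part -/
def InV (v : Fin n → ℝ × ℝ) : Prop := ∃ z t : ℝ, (z, v, t) ∈ Γ

/-- the `v`-parts appearing at time `0` -/
def InL (l : Fin n → ℝ × ℝ) : Prop := ∃ w : ℝ, (w, l, (0:ℝ)) ∈ Γ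

variable {lam Γ t₀}

lemma memT
    (hgen : {t : ℝ | ∃ (z : ℝ) (u : Fin n → ℝ × ℝ), (z, u, t) ∈ Γ}
      = {t : ℝ | ∃ m : ℤ, t = m * t₀})
    {γ : OscG n} (hγ : γ ∈ Γ) : ∃ m : ℤ, γ.2.2 = (m : ℝ) * t₀ := by
  obtain ⟨z, v, t⟩ := γ
  have ht : t ∈ {t : ℝ | ∃ (z : ℝ) (u : Fin n → ℝ × ℝ), (z, u, t) ∈ Γ} := ⟨z, v, hγ⟩
  rw [hgen] at ht
  exact ht

lemma rot_nat (hId : ∀ (i : Fin n) (p : ℝ × ℝ), rot (lam i * t₀) p = p)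
    (m : ℕ) (i : Fin n) (p : ℝ × ℝ) : rot (lam i * ((m : ℝ) * t₀)) p = p := by
  induction m with
  | zero => simp
  | succ k ih =>
      have harg : lam i * (((k:ℝ) + 1) * t₀) = lam i * ((k:ℝ) * t₀) + lam i * t₀ := by ring
      push_cast
      rw [harg, ← rot_rot, hId, ih]

lemma rot_int (hId : ∀ (i : Fin n) (p : ℝ × ℝ), rot (lam i * t₀) p = p)
    (m : ℤ) (i : Fin n) (p : ℝ × ℝ) : rot (lam i * ((m : ℝ) * t₀)) p = p := by
  obtain ⟨k, rfl | rfl⟩ := Int.eq_nat_or_neg m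
  · exact_mod_cast rot_nat hId k i p
  · have harg : lam i * ((((-(k:ℤ)) : ℤ) : ℝ) * t₀) = -(lam i * ((k:ℝ) * t₀)) := by
      push_cast; ring
    rw [harg]
    have h1 := rot_rot (lam i * ((k:ℝ) * t₀)) (-(lam i * ((k:ℝ) * t₀))) p
    rw [add_neg_cancel, rot_zero] at h1
    calc rot (-(lam i * ((k:ℝ) * t₀))) p
        = rot (lam i * ((k:ℝ) * t₀)) (rot (-(lam i * ((k:ℝ) * t₀))) p) := by
          rw [rot_nat hId]
      _ = p := h1

lemma rotΓ (hgen : {t : ℝ | ∃ (z : ℝ) (u : Fin n → ℝ × ℝ), (z, u, t) ∈ Γ}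
      = {t : ℝ | ∃ m : ℤ, t = m * t₀})
    (hId : ∀ (i : Fin n) (p : ℝ × ℝ), rot (lam i * t₀) p = p)
    {γ : OscG n} (hγ : γ ∈ Γ) (i : Fin n) (p : ℝ × ℝ) :
    rot (lam i * γ.2.2) p = p := by
  obtain ⟨m, hm⟩ := memT hgen hγ
  rw [hm]
  exact rot_int hId m i p

lemma rotΓneg (hgen : {t : ℝ | ∃ (z : ℝ) (u : Fin n → ℝ × ℝ), (z, u, t) ∈ Γ}
      = {t : ℝ | ∃ m : ℤ, t = m * t₀})
    (hId : ∀ (i : Fin n) (p : ℝ × ℝ), rot (lam i * t₀) p = p)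
    {γ : OscG n} (hγ : γ ∈ Γ) (i : Fin n) (p : ℝ × ℝ) :
    rot (lam i * (-γ.2.2)) p = p := by
  obtain ⟨m, hm⟩ := memT hgen hγ
  have : lam i * (-γ.2.2) = lam i * (((-m : ℤ) : ℝ) * t₀) := by rw [hm]; push_cast; ring
  rw [this]
  exact rot_int hId (-m) i p

variable (hgen : {t : ℝ | ∃ (z : ℝ) (u : Fin n → ℝ × ℝ), (z, u, t) ∈ Γ}
      = {t : ℝ | ∃ m : ℤ, t = m * t₀})
    (hId : ∀ (i : Fin n) (p : ℝ × ℝ), rot (lam i * t₀) p = p)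

include hgen hId

lemma mulΓ {γ δ : OscG n} (hγ : γ ∈ Γ) (hδ : δ ∈ Γ) :
    oscMul lam γ δ = (γ.1 + δ.1 + (1/2) * om γ.2.1 δ.2.1, γ.2.1 + δ.2.1, γ.2.2 + δ.2.2) := by
  unfold oscMul
  refine Prod.ext ?_ (Prod.ext ?_ ?_)
  · simp only
    unfold om
    rw [Finset.sum_congr rfl fun i _ => by rw [rotΓ hgen hId hγ]]
  · funext i
    simp only [Pi.add_apply]
    rw [rotΓ hgen hId hγ]
  · rfl

lemma invΓ {γ : OscG n} (hγ : γ ∈ Γ) :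
    oscInv lam γ = (-γ.1, -γ.2.1, -γ.2.2) := by
  unfold oscInv
  refine Prod.ext rfl (Prod.ext ?_ rfl)
  funext i
  simp only [Pi.neg_apply]
  rw [rotΓneg hgen hId hγ]

lemma InV_neg (hΓ : IsLattice lam Γ) {v : Fin n → ℝ × ℝ} (hv : InV Γ v) : InV Γ (-v) := by
  obtain ⟨z, t, hmem⟩ := hv
  have h1 := hΓ.inv_mem _ hmem
  rw [invΓ hgen hId hmem] at h1
  exact ⟨-z, -t, h1⟩

lemma InV_sub (hΓ : IsLattice lam Γ) {v w : Fin n → ℝ × ℝ}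
    (hv : InV Γ v) (hw : InV Γ w) : InV Γ (v - w) := by
  obtain ⟨z₁, s₁, h₁⟩ := hv
  obtain ⟨z₂, s₂, h₂⟩ := hw
  have hinv := hΓ.inv_mem _ h₂
  rw [invΓ hgen hId h₂] at hinv
  have hmul := hΓ.mul_mem _ h₁ _ hinv
  rw [mulΓ hgen hId h₁ hinv] at hmul
  dsimp only at hmul
  rw [← sub_eq_add_neg v w] at hmul
  exact ⟨_, _, hmul⟩

lemma InL_sub (hΓ : IsLattice lam Γ) {v w : Fin n → ℝ × ℝ}
    (hv : InL Γ v) (hw : InL Γ w) : InL Γ (v - w) := by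
  obtain ⟨z₁, h₁⟩ := hv
  obtain ⟨z₂, h₂⟩ := hw
  have hinv := hΓ.inv_mem _ h₂
  rw [invΓ hgen hId h₂] at hinv
  have hmul := hΓ.mul_mem _ h₁ _ hinv
  rw [mulΓ hgen hId h₁ hinv] at hmul
  dsimp only at hmul
  rw [← sub_eq_add_neg v w] at hmul
  simp only [neg_zero, add_zero] at hmul
  exact ⟨_, hmul⟩

lemma comm_mem (hΓ : IsLattice lam Γ) {g h : OscG n} (hg : g ∈ Γ) (hh : h ∈ Γ) :
    ((om g.2.1 h.2.1, (0 : Fin n → ℝ × ℝ), (0:ℝ)) : OscG n) ∈ Γ := by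
  obtain ⟨z₁, v₁, τ₁⟩ := g
  obtain ⟨z₂, v₂, τ₂⟩ := h
  have hgh := hΓ.mul_mem _ hg _ hh
  have hhg := hΓ.mul_mem _ hh _ hg
  rw [mulΓ hgen hId hg hh] at hgh
  rw [mulΓ hgen hId hh hg] at hhg
  dsimp only at hgh hhg ⊢
  have hinv := hΓ.inv_mem _ hhg
  rw [invΓ hgen hId hhg] at hinv
  dsimp only at hinv
  have hmul := hΓ.mul_mem _ hgh _ hinv
  rw [mulΓ hgen hId hgh hinv] at hmul
  dsimp only at hmul
  have heq : ((om v₁ v₂, (0 : Fin n → ℝ × ℝ), (0:ℝ)) : OscG n)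
      = ((z₁ + z₂ + (1/2) * om v₁ v₂) + -(z₂ + z₁ + (1/2) * om v₂ v₁)
            + (1/2) * om (v₁ + v₂) (-(v₂ + v₁)),
         (v₁ + v₂) + -(v₂ + v₁), (τ₁ + τ₂) + -(τ₂ + τ₁)) := by
    refine Prod.ext ?_ (Prod.ext ?_ (by dsimp only; ring))
    · dsimp only
      rw [om_neg_right, add_comm v₂ v₁, om_self, om_anti v₂ v₁]
      ring
    · dsimp only
      rw [add_comm v₂ v₁, add_neg_cancel]
  rw [heq]
  exact hmul

lemma pw_mem (hΓ : IsLattice lam Γ) {z₀ : ℝ} {u₀ : Fin n → ℝ × ℝ}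
    (hγ₀ : ((z₀, u₀, t₀) : OscG n) ∈ Γ) (m : ℤ) :
    (((m:ℝ) * z₀, (m:ℝ) • u₀, (m:ℝ) * t₀) : OscG n) ∈ Γ := by
  induction m using Int.induction_on with
  | zero =>
      have : (((0:ℤ):ℝ) * z₀, ((0:ℤ):ℝ) • u₀, ((0:ℤ):ℝ) * t₀) = oscOne n := by
        unfold oscOne
        push_cast
        refine Prod.ext (by ring) (Prod.ext ?_ (by ring))
        rw [zero_smul, zero_fun_eq]
      rw [this]
      exact hΓ.one_mem
  | succ k ih =>
      have hmul := hΓ.mul_mem _ ih _ hγ₀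
      rw [mulΓ hgen hId ih hγ₀] at hmul
      simp only at hmul
      have heq : ((((k:ℤ)+1 : ℤ):ℝ) * z₀, (((k:ℤ)+1 : ℤ):ℝ) • u₀, (((k:ℤ)+1 : ℤ):ℝ) * t₀)
          = ((((k:ℤ)):ℝ) * z₀ + z₀ + (1/2) * om (((k:ℤ):ℝ) • u₀) u₀,
             (((k:ℤ)):ℝ) • u₀ + u₀, (((k:ℤ)):ℝ) * t₀ + t₀) := by
        rw [om_smul_left, om_self]
        push_cast
        refine Prod.ext (by dsimp only; ring) (Prod.ext ?_ (by dsimp only; ring))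
        dsimp only
        rw [add_smul, one_smul]
      rw [heq]
      exact_mod_cast hmul
  | pred k ih =>
      have hinv := hΓ.inv_mem _ hγ₀
      rw [invΓ hgen hId hγ₀] at hinv
      simp only at hinv
      have hmul := hΓ.mul_mem _ ih _ hinv
      rw [mulΓ hgen hId ih hinv] at hmul
      simp only at hmul
      have heq : (((-(k:ℤ)-1 : ℤ):ℝ) * z₀, ((-(k:ℤ)-1 : ℤ):ℝ) • u₀, ((-(k:ℤ)-1 : ℤ):ℝ) * t₀)
          = (((-(k:ℤ) : ℤ):ℝ) * z₀ + -z₀ + (1/2) * om (((-(k:ℤ) : ℤ):ℝ) • u₀) (-u₀),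
             ((-(k:ℤ) : ℤ):ℝ) • u₀ + -u₀, ((-(k:ℤ) : ℤ):ℝ) * t₀ + -t₀) := by
        rw [om_neg_right, om_smul_left, om_self]
        push_cast
        refine Prod.ext (by dsimp only; ring) (Prod.ext ?_ (by dsimp only; ring))
        dsimp only
        rw [sub_smul, one_smul, sub_eq_add_neg]
      rw [heq]
      exact_mod_cast hmul

end Ctx

end Osc

namespace Osc

variable {n : ℕ}

lemma om_sub_right (u v w : Fin n → ℝ × ℝ) : om u (v - w) = om u v - om u w := by
  rw [sub_eq_add_neg, om_add_right, om_neg_right, ← sub_eq_add_neg]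

lemma om_zero_left (w : Fin n → ℝ × ℝ) : om 0 w = 0 := by
  unfold om
  refine Finset.sum_eq_zero fun i _ => ?_
  rw [Pi.zero_apply]
  exact dot2_zero_left _

lemma dist_central (c : ℝ) :
    dist ((c, (0 : Fin n → ℝ × ℝ), (0:ℝ)) : OscG n) (oscOne n) = |c| := by
  unfold oscOne
  rw [← zero_fun_eq]
  rw [Prod.dist_eq, Prod.dist_eq]
  simp [Real.dist_eq]

section Ctx

variable {lam : Fin n → ℝ} {Γ : Set (OscG n)} {t₀ : ℝ}

variable (hgen : {t : ℝ | ∃ (z : ℝ) (u : Fin n → ℝ × ℝ), (z, u, t) ∈ Γ}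
      = {t : ℝ | ∃ m : ℤ, t = m * t₀})
    (hId : ∀ (i : Fin n) (p : ℝ × ℝ), rot (lam i * t₀) p = p)
    (hΓ : IsLattice lam Γ)

include hgen hId hΓ

lemma central_eq_zero {ε : ℝ} (hsep : ∀ γ ∈ Γ, dist γ (oscOne n) < ε → γ = oscOne n)
    {c : ℝ} (hc : ((c, (0 : Fin n → ℝ × ℝ), (0:ℝ)) : OscG n) ∈ Γ) (hlt : |c| < ε) :
    c = 0 := by
  have h := hsep _ hc (by rw [dist_central]; exact hlt)
  exact congrArg Prod.fst h

omit hgen hId hΓ in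
lemma dense_x {R : ℝ} (hR : ∀ g : OscG n, ∃ γ ∈ Γ, ‖oscMul lam g γ‖ ≤ R)
    (x : Fin n → ℝ × ℝ) :
    ∃ γ ∈ Γ, ‖x + γ.2.1‖ ≤ R ∧ |γ.2.2| ≤ R := by
  obtain ⟨γ, hγ, hb⟩ := hR ((0, x, 0) : OscG n)
  refine ⟨γ, hγ, ?_, ?_⟩
  · have h21 : (oscMul lam ((0, x, 0) : OscG n) γ).2.1 = x + γ.2.1 := by
      unfold oscMul
      dsimp only
      funext i
      rw [mul_zero, rot_zero]
      rfl
    calc ‖x + γ.2.1‖ = ‖(oscMul lam ((0, x, 0) : OscG n) γ).2.1‖ := by rw [h21]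
      _ ≤ ‖(oscMul lam ((0, x, 0) : OscG n) γ).2‖ := norm_fst_le _
      _ ≤ ‖oscMul lam ((0, x, 0) : OscG n) γ‖ := norm_snd_le _
      _ ≤ R := hb
  · have h22 : (oscMul lam ((0, x, 0) : OscG n) γ).2.2 = γ.2.2 := by
      unfold oscMul
      dsimp only
      rw [zero_add]
    calc |γ.2.2| = ‖(oscMul lam ((0, x, 0) : OscG n) γ).2.2‖ := by
          rw [h22, Real.norm_eq_abs]
      _ ≤ ‖(oscMul lam ((0, x, 0) : OscG n) γ).2‖ := norm_snd_le _
      _ ≤ ‖oscMul lam ((0, x, 0) : OscG n) γ‖ := norm_snd_le _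
      _ ≤ R := hb

lemma dense_V {R : ℝ} (hR : ∀ g : OscG n, ∃ γ ∈ Γ, ‖oscMul lam g γ‖ ≤ R)
    (x : Fin n → ℝ × ℝ) :
    ∃ v, InV Γ v ∧ ‖x - v‖ ≤ R := by
  obtain ⟨γ, hγ, h1, _⟩ := dense_x hR x
  obtain ⟨a, b, c⟩ := γ
  have hb : InV Γ b := ⟨a, c, hγ⟩
  refine ⟨-b, InV_neg hgen hId hΓ hb, ?_⟩
  rwa [sub_neg_eq_add]

lemma dense0 (ht₀ : 0 < t₀) {z₀ : ℝ} {u₀ : Fin n → ℝ × ℝ}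
    (hγ₀ : ((z₀, u₀, t₀) : OscG n) ∈ Γ)
    {R : ℝ} (hR : ∀ g : OscG n, ∃ γ ∈ Γ, ‖oscMul lam g γ‖ ≤ R)
    {M : ℕ} (hM : ∀ s : ℤ, |(s:ℝ) * t₀| ≤ R → s.natAbs ≤ M)
    (x : Fin n → ℝ × ℝ) :
    ∃ (s : ℤ) (l : Fin n → ℝ × ℝ), s.natAbs ≤ M ∧ InL Γ l
      ∧ ‖x + ((s:ℝ) • u₀ + l)‖ ≤ R := by
  obtain ⟨γ, hγ, h1, h2⟩ := dense_x hR x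
  obtain ⟨s, hs⟩ := memT hgen hγ
  have hsM : s.natAbs ≤ M := hM s (by rwa [← hs])
  have hpw := pw_mem hgen hId hΓ hγ₀ (-s)
  have hmul := hΓ.mul_mem _ hγ _ hpw
  rw [mulΓ hgen hId hγ hpw] at hmul
  dsimp only at hmul
  rw [hs] at hmul
  have ht' : ((s:ℤ):ℝ) * t₀ + (((-s : ℤ)):ℝ) * t₀ = 0 := by push_cast; ring
  rw [ht'] at hmul
  refine ⟨s, γ.2.1 + (((-s : ℤ)):ℝ) • u₀, hsM, ⟨_, hmul⟩, ?_⟩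
  have hrw : ((s:ℝ)) • u₀ + (γ.2.1 + (((-s : ℤ)):ℝ) • u₀) = γ.2.1 := by
    push_cast
    rw [neg_smul]
    abel
  rw [hrw]
  exact h1

lemma V_sep {R : ℝ} (hRpos : 0 < R)
    (hR : ∀ g : OscG n, ∃ γ ∈ Γ, ‖oscMul lam g γ‖ ≤ R)
    {ε : ℝ} (hεpos : 0 < ε)
    (hsep : ∀ γ ∈ Γ, dist γ (oscOne n) < ε → γ = oscOne n)
    {v : Fin n → ℝ × ℝ} (hv : InV Γ v) (hvne : v ≠ 0) :
    ε / (4 * n * R + 1) ≤ ‖v‖ := by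
  by_contra hlt
  push_neg at hlt
  set E : ℝ := ∑ i : Fin n, ((v i).1 ^ 2 + (v i).2 ^ 2) with hE
  have hEpos : 0 < E := by
    obtain ⟨i₀, hi₀⟩ : ∃ i, v i ≠ 0 := by
      by_contra hall
      push_neg at hall
      exact hvne (funext fun i => hall i)
    refine Finset.sum_pos' (fun i _ => by positivity) ⟨i₀, Finset.mem_univ _, ?_⟩
    have hor : (v i₀).1 ≠ 0 ∨ (v i₀).2 ≠ 0 := by
      by_contra hb
      push_neg at hb
      exact hi₀ (Prod.ext hb.1 hb.2)
    rcases hor with h | h <;> positivity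
  set p : Fin n → ℝ × ℝ := ((ε/2)/E) • (fun i => (-(v i).2, (v i).1)) with hp
  have hvp : om v p = ε / 2 := by
    rw [hp, om_smul_right]
    have hOJ : om v (fun i => (-(v i).2, (v i).1)) = E := by
      unfold om
      rw [hE]
      refine Finset.sum_congr rfl fun i _ => ?_
      rw [dot2J_eq]
      dsimp only
      ring
    rw [hOJ]
    field_simp
  obtain ⟨ν, hν, hνd⟩ := dense_V hgen hId hΓ hR p
  obtain ⟨z1, t1, hm1⟩ := hv
  obtain ⟨z2, t2, hm2⟩ := hν
  have hcm := comm_mem hgen hId hΓ hm1 hm2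
  dsimp only at hcm
  have herr : |om v ν - ε/2| ≤ 2 * n * ‖v‖ * R := by
    have heq : om v ν - ε/2 = om v (ν - p) := by rw [om_sub_right, hvp]
    rw [heq]
    calc |om v (ν - p)| ≤ 2 * n * ‖v‖ * ‖ν - p‖ := om_abs_le _ _
      _ ≤ 2 * n * ‖v‖ * R := by
          have h' : ‖ν - p‖ ≤ R := by rwa [norm_sub_rev] at hνd
          have : (0:ℝ) ≤ 2 * n * ‖v‖ := by positivity
          exact mul_le_mul_of_nonneg_left h' this
  have hkey : 2 * (n:ℝ) * ‖v‖ * R < ε / 2 := by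
    have h0 : (0:ℝ) ≤ (n:ℝ) := Nat.cast_nonneg n
    have h1 : ‖v‖ * (4 * n * R + 1) < ε := by
      have hpos : (0:ℝ) < 4 * n * R + 1 := by positivity
      calc ‖v‖ * (4 * n * R + 1) < (ε / (4 * n * R + 1)) * (4 * n * R + 1) := by
            exact mul_lt_mul_of_pos_right hlt hpos
        _ = ε := by field_simp
    nlinarith [norm_nonneg v, mul_nonneg (mul_nonneg h0 (norm_nonneg v)) hRpos.le]
  have habs := abs_le.mp herr
  have hompos : 0 < om v ν := by linarith
  have homlt : |om v ν| < ε := by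
    rw [abs_of_pos hompos]
    linarith
  have := central_eq_zero hgen hId hΓ hsep hcm homlt
  exact hompos.ne' this

lemma exists_central_pos (hn : 0 < n) {R : ℝ} (hRpos : 0 < R)
    (hR : ∀ g : OscG n, ∃ γ ∈ Γ, ‖oscMul lam g γ‖ ≤ R) :
    ∃ c : ℝ, c ≠ 0 ∧ ((c, (0 : Fin n → ℝ × ℝ), (0:ℝ)) : OscG n) ∈ Γ := by
  set N : ℝ := 5 * R + 1 with hN
  have hNpos : 0 < N := by positivity
  set a : Fin n → ℝ × ℝ := fun _ => (N, 0) with ha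
  set b : Fin n → ℝ × ℝ := fun _ => (0, N) with hb
  obtain ⟨ν₁, hν₁, hd₁⟩ := dense_V hgen hId hΓ hR a
  obtain ⟨ν₂, hν₂, hd₂⟩ := dense_V hgen hId hΓ hR b
  obtain ⟨z1, t1, hm1⟩ := hν₁
  obtain ⟨z2, t2, hm2⟩ := hν₂
  have hcm := comm_mem hgen hId hΓ hm1 hm2
  dsimp only at hcm
  refine ⟨om ν₁ ν₂, ?_, hcm⟩
  have hab : om a b = n * N ^ 2 := by
    unfold om
    rw [Finset.sum_congr rfl (fun i _ => by rw [dot2J_eq, ha, hb])]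
    dsimp only
    rw [Finset.sum_const, Finset.card_univ, Fintype.card_fin, nsmul_eq_mul]
    ring
  have hna : ‖a‖ ≤ N := by
    refine pi_norm_le_iff_of_nonneg hNpos.le |>.mpr fun i => ?_
    rw [ha]
    rw [Prod.norm_def]
    simp only [Real.norm_eq_abs, abs_of_pos hNpos, abs_zero]
    exact max_le le_rfl hNpos.le
  have hnb : ‖b‖ ≤ N := by
    refine pi_norm_le_iff_of_nonneg hNpos.le |>.mpr fun i => ?_
    rw [hb]
    rw [Prod.norm_def]
    simp only [Real.norm_eq_abs, abs_of_pos hNpos, abs_zero]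
    exact max_le hNpos.le le_rfl
  have e1 : ‖ν₁ - a‖ ≤ R := by rwa [norm_sub_rev]
  have e2 : ‖ν₂ - b‖ ≤ R := by rwa [norm_sub_rev]
  have hdecomp : om ν₁ ν₂
      = om a b + om (ν₁ - a) b + om a (ν₂ - b) + om (ν₁ - a) (ν₂ - b) := by
    conv_lhs => rw [show ν₁ = a + (ν₁ - a) by abel, show ν₂ = b + (ν₂ - b) by abel]
    rw [om_add_left, om_add_right, om_add_right]
    ring
  have B1 : |om (ν₁ - a) b| ≤ 2 * n * R * N := by
    calc |om (ν₁ - a) b| ≤ 2 * n * ‖ν₁ - a‖ * ‖b‖ := om_abs_le _ _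
      _ ≤ 2 * n * R * N := by
          have h0 : (0:ℝ) ≤ 2 * n := by positivity
          have := mul_le_mul (mul_le_mul_of_nonneg_left e1 h0) hnb (norm_nonneg b)
            (by positivity)
          linarith [this]
  have B2 : |om a (ν₂ - b)| ≤ 2 * n * N * R := by
    calc |om a (ν₂ - b)| ≤ 2 * n * ‖a‖ * ‖ν₂ - b‖ := om_abs_le _ _
      _ ≤ 2 * n * N * R := by
          have h0 : (0:ℝ) ≤ 2 * n := by positivity
          have := mul_le_mul (mul_le_mul_of_nonneg_left hna h0) e2 (norm_nonneg _)
            (by positivity)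
          linarith [this]
  have B3 : |om (ν₁ - a) (ν₂ - b)| ≤ 2 * n * R * R := by
    calc |om (ν₁ - a) (ν₂ - b)| ≤ 2 * n * ‖ν₁ - a‖ * ‖ν₂ - b‖ := om_abs_le _ _
      _ ≤ 2 * n * R * R := by
          have h0 : (0:ℝ) ≤ 2 * n := by positivity
          have := mul_le_mul (mul_le_mul_of_nonneg_left e1 h0) e2 (norm_nonneg _)
            (by positivity)
          linarith [this]
  have hn1 : (1:ℝ) ≤ (n:ℝ) := by exact_mod_cast hn
  have hB1 := abs_le.mp B1
  have hB2 := abs_le.mp B2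
  have hB3 := abs_le.mp B3
  have hpos : 0 < om ν₁ ν₂ := by
    rw [hdecomp, hab, hN]
    nlinarith [hRpos, hn1, mul_pos hRpos hRpos]
  exact hpos.ne'

lemma exists_central_zero (hn : n = 0) (ht₀ : 0 < t₀) {z₀ : ℝ} {u₀ : Fin n → ℝ × ℝ}
    (hγ₀ : ((z₀, u₀, t₀) : OscG n) ∈ Γ)
    {R : ℝ} (hRpos : 0 < R)
    (hR : ∀ g : OscG n, ∃ γ ∈ Γ, ‖oscMul lam g γ‖ ≤ R)
    {M : ℕ} (hM : ∀ s : ℤ, |(s:ℝ) * t₀| ≤ R → s.natAbs ≤ M) :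
    ∃ c : ℝ, c ≠ 0 ∧ ((c, (0 : Fin n → ℝ × ℝ), (0:ℝ)) : OscG n) ∈ Γ := by
  have hempty : (Finset.univ : Finset (Fin n)) = ∅ := by
    refine Finset.univ_eq_empty_iff.mpr ⟨fun i => absurd i.2 (by omega)⟩
  have hfun : ∀ f g : Fin n → ℝ × ℝ, f = g := fun f g =>
    funext fun i => absurd i.2 (by omega)
  set Z : ℝ := R + (M:ℝ) * |z₀| + 1 with hZ
  obtain ⟨γ, hγ, hbnd⟩ := hR ((Z, (0 : Fin n → ℝ × ℝ), 0) : OscG n)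
  have he1 : (oscMul lam ((Z, (0 : Fin n → ℝ × ℝ), 0) : OscG n) γ).1 = Z + γ.1 := by
    unfold oscMul
    dsimp only
    rw [Finset.sum_congr rfl (fun i _ => by rw [Pi.zero_apply, dot2_zero_left])]
    rw [Finset.sum_const, smul_zero]
    ring
  have he2 : (oscMul lam ((Z, (0 : Fin n → ℝ × ℝ), 0) : OscG n) γ).2.2 = γ.2.2 := by
    unfold oscMul
    dsimp only
    rw [zero_add]
  have hZb : |Z + γ.1| ≤ R := by
    rw [← he1]
    calc |(oscMul lam ((Z, (0 : Fin n → ℝ × ℝ), 0) : OscG n) γ).1|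
        = ‖(oscMul lam ((Z, (0 : Fin n → ℝ × ℝ), 0) : OscG n) γ).1‖ := by
          rw [Real.norm_eq_abs]
      _ ≤ ‖oscMul lam ((Z, (0 : Fin n → ℝ × ℝ), 0) : OscG n) γ‖ := norm_fst_le _
      _ ≤ R := hbnd
  have htb : |γ.2.2| ≤ R := by
    rw [← he2]
    calc |(oscMul lam ((Z, (0 : Fin n → ℝ × ℝ), 0) : OscG n) γ).2.2|
        = ‖(oscMul lam ((Z, (0 : Fin n → ℝ × ℝ), 0) : OscG n) γ).2.2‖ := by
          rw [Real.norm_eq_abs]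
      _ ≤ ‖(oscMul lam ((Z, (0 : Fin n → ℝ × ℝ), 0) : OscG n) γ).2‖ := norm_snd_le _
      _ ≤ ‖oscMul lam ((Z, (0 : Fin n → ℝ × ℝ), 0) : OscG n) γ‖ := norm_snd_le _
      _ ≤ R := hbnd
  obtain ⟨s, hs⟩ := memT hgen hγ
  have hsM : s.natAbs ≤ M := hM s (by rwa [← hs])
  have hpw := pw_mem hgen hId hΓ hγ₀ (-s)
  have hmul := hΓ.mul_mem _ hγ _ hpw
  rw [mulΓ hgen hId hγ hpw] at hmul
  dsimp only at hmul
  rw [hs] at hmul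
  have ht' : ((s:ℤ):ℝ) * t₀ + (((-s : ℤ)):ℝ) * t₀ = 0 := by push_cast; ring
  rw [ht'] at hmul
  have homz : om γ.2.1 ((((-s : ℤ)):ℝ) • u₀) = 0 := by
    unfold om
    rw [hempty, Finset.sum_empty]
  rw [homz] at hmul
  set c : ℝ := γ.1 + (((-s : ℤ)):ℝ) * z₀ + 1/2 * 0 with hc
  have hcmem : ((c, (0 : Fin n → ℝ × ℝ), (0:ℝ)) : OscG n) ∈ Γ := by
    have := hmul
    have heqv : γ.2.1 + (((-s : ℤ)):ℝ) • u₀ = (0 : Fin n → ℝ × ℝ) := hfun _ _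
    rwa [heqv] at this
  refine ⟨c, ?_, hcmem⟩
  have hsabs : |(s:ℝ)| ≤ (M:ℝ) := by
    have h' : |s| ≤ (M:ℤ) := by rw [Int.abs_eq_natAbs]; omega
    exact_mod_cast h'
  have hszbound : |(((-s : ℤ)):ℝ) * z₀| ≤ (M:ℝ) * |z₀| := by
    rw [abs_mul]
    push_cast
    rw [abs_neg]
    exact mul_le_mul_of_nonneg_right hsabs (abs_nonneg z₀)
  have h1 : γ.1 ≤ R - Z := by
    have := abs_le.mp hZb
    linarith [this.2]
  have h2 : (((-s : ℤ)):ℝ) * z₀ ≤ (M:ℝ) * |z₀| := le_trans (le_abs_self _) hszbound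
  have hclt : c < 0 := by
    rw [hc]
    have h3 : Z = R + (M:ℝ) * |z₀| + 1 := hZ
    linarith
  exact hclt.ne

end Ctx

end Osc

namespace Osc

variable {n : ℕ}

section Ctx

variable {lam : Fin n → ℝ} {Γ : Set (OscG n)} {t₀ : ℝ}

variable (hgen : {t : ℝ | ∃ (z : ℝ) (u : Fin n → ℝ × ℝ), (z, u, t) ∈ Γ}
      = {t : ℝ | ∃ m : ℤ, t = m * t₀})
    (hId : ∀ (i : Fin n) (p : ℝ × ℝ), rot (lam i * t₀) p = p)
    (hΓ : IsLattice lam Γ)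

include hgen hId hΓ

lemma near (ht₀ : 0 < t₀) {z₀ : ℝ} {u₀ : Fin n → ℝ × ℝ}
    (hγ₀ : ((z₀, u₀, t₀) : OscG n) ∈ Γ)
    {R : ℝ} (hR : ∀ g : OscG n, ∃ γ ∈ Γ, ‖oscMul lam g γ‖ ≤ R)
    {M : ℕ} (hM : ∀ s : ℤ, |(s:ℝ) * t₀| ≤ R → s.natAbs ≤ M)
    (y : Fin n → ℝ × ℝ) :
    ∃ (q : ℕ) (l : Fin n → ℝ × ℝ), 1 ≤ q ∧ q ≤ 2*M+1 ∧ InL Γ l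
      ∧ ‖(q:ℝ) • y + l‖ ≤ 2*R := by
  have hD := dense0 hgen hId hΓ ht₀ hγ₀ hR hM
  choose s l hs hl hnorm using fun j : ℕ => hD ((-(j:ℝ)) • y)
  have key : ∀ i j : ℕ, i < j → j < 2*M+2 → s i = s j →
      ∃ (q : ℕ) (l' : Fin n → ℝ × ℝ), 1 ≤ q ∧ q ≤ 2*M+1 ∧ InL Γ l'
        ∧ ‖(q:ℝ) • y + l'‖ ≤ 2*R := by
    intro i j hij hj hsij
    refine ⟨j - i, l i - l j, by omega, by omega, InL_sub hgen hId hΓ (hl i) (hl j), ?_⟩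
    have hA := hnorm i
    have hB := hnorm j
    have heq : ((j - i : ℕ) : ℝ) • y + (l i - l j)
        = ((-(i:ℝ)) • y + ((s i : ℝ) • u₀ + l i))
          - ((-(j:ℝ)) • y + ((s j : ℝ) • u₀ + l j)) := by
      rw [Nat.cast_sub hij.le, hsij, sub_smul, neg_smul, neg_smul]
      abel
    rw [heq]
    calc ‖_ - _‖ ≤ ‖(-(i:ℝ)) • y + ((s i : ℝ) • u₀ + l i)‖
          + ‖(-(j:ℝ)) • y + ((s j : ℝ) • u₀ + l j)‖ := norm_sub_le _ _
      _ ≤ 2*R := by linarith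
  have hmaps : ∀ j ∈ Finset.range (2*M+2), s j ∈ Finset.Icc (-(M:ℤ)) (M:ℤ) := by
    intro j _
    have := hs j
    rw [Finset.mem_Icc]
    omega
  have hcard : (Finset.Icc (-(M:ℤ)) (M:ℤ)).card < (Finset.range (2*M+2)).card := by
    rw [Finset.card_range, Int.card_Icc]
    omega
  obtain ⟨i, hi, j, hj, hne, hsij⟩ :=
    Finset.exists_ne_map_eq_of_card_lt_of_maps_to hcard hmaps
  rw [Finset.mem_range] at hi hj
  rcases hne.lt_or_gt with hlt | hlt
  · exact key i j hlt hj hsij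
  · exact key j i hlt hi hsij.symm

lemma goal2 (ht₀ : 0 < t₀) {z₀ : ℝ} {u₀ : Fin n → ℝ × ℝ}
    (hγ₀ : ((z₀, u₀, t₀) : OscG n) ∈ Γ)
    {R : ℝ} (hRpos : 0 < R)
    (hR : ∀ g : OscG n, ∃ γ ∈ Γ, ‖oscMul lam g γ‖ ≤ R)
    {M : ℕ} (hM : ∀ s : ℤ, |(s:ℝ) * t₀| ≤ R → s.natAbs ≤ M)
    {ε : ℝ} (hεpos : 0 < ε)
    (hsep : ∀ γ ∈ Γ, dist γ (oscOne n) < ε → γ = oscOne n) :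
    ∃ m : ℤ, m ≠ 0 ∧ InL Γ (((m:ℤ):ℝ) • u₀) := by
  classical
  set Q : ℕ := 2*M+1 with hQ
  have hseq : ∀ k : ℕ, ∃ (m : ℕ) (l : Fin n → ℝ × ℝ),
      ((Q+1)^k ≤ m) ∧ (m ≤ Q*(Q+1)^k) ∧ InL Γ l ∧ ‖(m:ℝ) • u₀ + l‖ ≤ 2*R := by
    intro k
    obtain ⟨q, l, hq1, hq2, hl, hnq⟩ :=
      near hgen hId hΓ ht₀ hγ₀ hR hM ((((Q+1)^k : ℕ) : ℝ) • u₀)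
    refine ⟨q * (Q+1)^k, l, ?_, ?_, hl, ?_⟩
    · calc (Q+1)^k = 1 * (Q+1)^k := (one_mul _).symm
        _ ≤ q * (Q+1)^k := Nat.mul_le_mul_right _ hq1
    · exact Nat.mul_le_mul_right _ hq2
    · rw [smul_smul] at hnq
      have : ((q * (Q+1)^k : ℕ) : ℝ) = (q:ℝ) * (((Q+1)^k : ℕ) : ℝ) := by push_cast; ring
      rwa [this]
  choose mseq lseq hm1 hm2 hlmem hlnorm using hseq
  have hQpos : 0 < Q := by omega
  have hmono : StrictMono mseq := by
    apply strictMono_nat_of_lt_succ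
    intro k
    have h1 : mseq k ≤ Q * (Q+1)^k := hm2 k
    have h2 : (Q+1)^(k+1) ≤ mseq (k+1) := hm1 (k+1)
    have h3 : Q * (Q+1)^k < (Q+1)^(k+1) := by
      rw [pow_succ, mul_comm ((Q+1)^k) (Q+1)]
      have hp : 0 < (Q+1)^k := Nat.pow_pos (by omega)
      exact Nat.mul_lt_mul_of_lt_of_le (by omega) le_rfl hp
    omega
  have hgV : ∀ k, InV Γ ((mseq k : ℝ) • u₀ + lseq k) := by
    intro k
    obtain ⟨w, hw⟩ := hlmem k
    have hpw := pw_mem hgen hId hΓ hγ₀ ((mseq k : ℕ) : ℤ)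
    have hmul := hΓ.mul_mem _ hpw _ hw
    rw [mulΓ hgen hId hpw hw] at hmul
    dsimp only at hmul
    push_cast at hmul
    exact ⟨_, _, hmul⟩
  by_cases hcol : ∃ k k' : ℕ, k ≠ k'
      ∧ (mseq k : ℝ) • u₀ + lseq k = (mseq k' : ℝ) • u₀ + lseq k'
  · obtain ⟨k, k', hne, heq⟩ := hcol
    refine ⟨((mseq k : ℕ) : ℤ) - ((mseq k' : ℕ) : ℤ), ?_, ?_⟩
    · have hmm : mseq k ≠ mseq k' := fun h => hne (hmono.injective h)
      omega
    · have hveq : ((((mseq k : ℕ) : ℤ) - ((mseq k' : ℕ) : ℤ) : ℤ) : ℝ) • u₀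
          = lseq k' - lseq k := by
        push_cast
        rw [sub_smul]
        rw [sub_eq_sub_iff_add_eq_add]
        rw [heq]
        abel
      rw [hveq]
      exact InL_sub hgen hId hΓ (hlmem k') (hlmem k)
  · push_neg at hcol
    exfalso
    set g : ℕ → (Fin n → ℝ × ℝ) := fun k => (mseq k : ℝ) • u₀ + lseq k with hg
    have hbdd : ∀ k, g k ∈ Metric.closedBall (0 : Fin n → ℝ × ℝ) (2*R) := fun k => by
      rw [Metric.mem_closedBall, dist_zero_right]
      exact hlnorm k
    obtain ⟨x₀, _, φ, hφ, hconv⟩ :=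
      tendsto_subseq_of_bounded Metric.isBounded_closedBall hbdd
    set δ : ℝ := ε / (4 * n * R + 1) with hδ
    have hδpos : 0 < δ := by positivity
    rw [Metric.tendsto_atTop] at hconv
    obtain ⟨K, hK⟩ := hconv (δ/2) (by positivity)
    have h1 := hK K le_rfl
    have h2 := hK (K+1) (Nat.le_succ K)
    have hdist : dist (g (φ (K+1))) (g (φ K)) < δ := by
      calc dist (g (φ (K+1))) (g (φ K))
          ≤ dist (g (φ (K+1))) x₀ + dist x₀ (g (φ K)) := dist_triangle _ _ _
        _ < δ/2 + δ/2 := by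
            rw [dist_comm x₀]
            exact add_lt_add h2 h1
        _ = δ := by ring
    have hφne : φ K ≠ φ (K+1) := (hφ (Nat.lt_succ_self K)).ne
    have hgne : g (φ (K+1)) - g (φ K) ≠ 0 :=
      sub_ne_zero.mpr (hcol (φ (K+1)) (φ K) hφne.symm)
    have hVd : InV Γ (g (φ (K+1)) - g (φ K)) :=
      InV_sub hgen hId hΓ (hgV _) (hgV _)
    have hlow := V_sep hgen hId hΓ hRpos hR hεpos hsep hVd hgne
    rw [← hδ] at hlow
    rw [dist_eq_norm] at hdist
    linarith

end Ctx

end Osc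


end OscAux

/-- If `t₀ > 0` generates the additive subgroup
`T(Γ) = { t | (z,u,t) ∈ Γ for some z,u }` of `ℝ` and `exp(t₀ N_λ) = Id`
(the case `K₀ = 1`), then `Γ` contains an element `(z,0,t)` with `z ≠ 0` and
`t ≠ 0`. -/
theorem stmt_7 {n : ℕ} (lam : Fin n → ℝ) (hlam : ∀ i, 0 < lam i)
    (Γ : Set (OscG n)) (hΓ : IsLattice lam Γ)
    (t₀ : ℝ) (ht₀ : 0 < t₀)
    (hgen : {t : ℝ | ∃ (z : ℝ) (u : Fin n → ℝ × ℝ), (z, u, t) ∈ Γ}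
              = {t : ℝ | ∃ m : ℤ, t = m * t₀})
    (hId : ∀ (i : Fin n) (p : ℝ × ℝ), rot (lam i * t₀) p = p) :
    ∃ z t : ℝ, z ≠ 0 ∧ t ≠ 0 ∧
      ((z, (fun _ => (0, 0) : Fin n → ℝ × ℝ), t) : OscG n) ∈ Γ := by

  classical
  obtain ⟨R, hRpos, hR⟩ := Osc.exists_fund_radius lam Γ hΓ
  obtain ⟨ε, hεpos, hsep⟩ := Osc.exists_sep_radius lam Γ hΓ
  have ht₀mem : t₀ ∈ {t : ℝ | ∃ m : ℤ, t = m * t₀} := ⟨1, by push_cast; ring⟩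
  rw [← hgen] at ht₀mem
  obtain ⟨z₀, u₀, hγ₀⟩ := ht₀mem
  set M : ℕ := (⌈R / t₀⌉).toNat with hMdef
  have hM : ∀ s : ℤ, |(s:ℝ) * t₀| ≤ R → s.natAbs ≤ M := by
    intro s hs
    have h1 : |(s:ℝ)| ≤ R / t₀ := by
      rw [le_div_iff₀ ht₀]
      rwa [abs_mul, abs_of_pos ht₀] at hs
    have h2 : ((s.natAbs : ℤ) : ℝ) ≤ R / t₀ := by
      rw [← Int.abs_eq_natAbs, Int.cast_abs]
      exact h1
    have h3 : ((s.natAbs : ℤ) : ℝ) ≤ ((⌈R / t₀⌉ : ℤ) : ℝ) := le_trans h2 (Int.le_ceil _)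
    have h4 : (s.natAbs : ℤ) ≤ ⌈R / t₀⌉ := by exact_mod_cast h3
    omega
  have hcen : ∃ c : ℝ, c ≠ 0 ∧ ((c, (0 : Fin n → ℝ × ℝ), (0:ℝ)) : OscG n) ∈ Γ := by
    rcases Nat.eq_zero_or_pos n with hn | hn
    · exact Osc.exists_central_zero hgen hId hΓ hn ht₀ hγ₀ hRpos hR hM
    · exact Osc.exists_central_pos hgen hId hΓ hn hRpos hR
  obtain ⟨c₀, hc₀ne, hc₀mem⟩ := hcen
  obtain ⟨m, hmne, hmL⟩ := Osc.goal2 hgen hId hΓ ht₀ hγ₀ hRpos hR hM hεpos hsep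
  obtain ⟨w, hw⟩ := hmL
  have hpw := Osc.pw_mem hgen hId hΓ hγ₀ m
  have hinv := hΓ.inv_mem _ hw
  rw [Osc.invΓ hgen hId hw] at hinv
  dsimp only at hinv
  rw [neg_zero] at hinv
  have hmul := hΓ.mul_mem _ hpw _ hinv
  rw [Osc.mulΓ hgen hId hpw hinv] at hmul
  dsimp only at hmul
  have hsimp : ((((m:ℤ):ℝ) * z₀ + -w + 1/2 * Osc.om (((m:ℤ):ℝ) • u₀) (-(((m:ℤ):ℝ) • u₀)),
      ((m:ℤ):ℝ) • u₀ + -(((m:ℤ):ℝ) • u₀), ((m:ℤ):ℝ) * t₀ + 0) : OscG n)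
      = (((((m:ℤ):ℝ)) * z₀ - w, (0 : Fin n → ℝ × ℝ), ((m:ℤ):ℝ) * t₀) : OscG n) := by
    rw [Osc.om_neg_right, Osc.om_self, neg_zero]
    refine Prod.ext (by dsimp only; ring) (Prod.ext ?_ (by dsimp only; ring))
    dsimp only
    rw [add_neg_cancel]
  rw [hsimp] at hmul
  have htne : ((m:ℤ):ℝ) * t₀ ≠ 0 := mul_ne_zero (Int.cast_ne_zero.mpr hmne) ht₀.ne'
  by_cases hz : ((m:ℤ):ℝ) * z₀ - w = 0
  · rw [hz] at hmul
    have hmul2 := hΓ.mul_mem _ hc₀mem _ hmul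
    rw [Osc.mulΓ hgen hId hc₀mem hmul] at hmul2
    dsimp only at hmul2
    have hsimp2 : ((c₀ + 0 + 1/2 * Osc.om (0 : Fin n → ℝ × ℝ) (0 : Fin n → ℝ × ℝ),
        (0 : Fin n → ℝ × ℝ) + (0 : Fin n → ℝ × ℝ), (0:ℝ) + ((m:ℤ):ℝ) * t₀) : OscG n)
        = ((c₀, (0 : Fin n → ℝ × ℝ), ((m:ℤ):ℝ) * t₀) : OscG n) := by
      rw [Osc.om_zero_left]
      refine Prod.ext (by dsimp only; ring) (Prod.ext ?_ (by dsimp only; ring))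
      dsimp only
      rw [add_zero]
    rw [hsimp2] at hmul2
    refine ⟨c₀, ((m:ℤ):ℝ) * t₀, hc₀ne, htne, ?_⟩
    rw [Osc.zero_fun_eq]
    exact hmul2
  · refine ⟨((m:ℤ):ℝ) * z₀ - w, ((m:ℤ):ℝ) * t₀, hz, htne, ?_⟩
    rw [Osc.zero_fun_eq]
    exact hmul
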